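/- Let T be a rooted tree with root r and more than one vertex, and for nonnegative integers l, k let T^r_{l,k} be the tree formed by attaching two disjoint paths with l and k vertices respectively to r (each by an edge from r to one end of the path). If 1 ≤ l ≤ k, then W(T^r_{l-1,k+1}) - W(T^r_{l,k}) = (N - l - k - 1)(k - l + 1) > 0, where N is the total number of vertices and W is the Wiener index. -/

import Mathlib

/-- The Wiener index of a finite graph: the sum of pairwise distances
(each unordered pair counted once). -/
noncomputable def wiener {V : Type*} [Fintype V] (G : SimpleGraph V) : ℕ :=
  (∑ i : V, ∑ j : V, G.dist i j) / 2

/-- The vine `T^r_{l,k}`: the tree obtained from a rooted tree `T` (root `r`) by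
attaching two disjoint paths, with `l` and `k` vertices respectively, to the root. -/
def vine {V : Type*} (T : SimpleGraph V) (r : V) (l k : ℕ) :
    SimpleGraph (V ⊕ (Fin l ⊕ Fin k)) :=
  SimpleGraph.fromRel (fun a b =>
    match a, b with
    | Sum.inl u, Sum.inl v => T.Adj u v
    | Sum.inl u, Sum.inr (Sum.inl i) => u = r ∧ (i : ℕ) = 0
    | Sum.inl u, Sum.inr (Sum.inr i) => u = r ∧ (i : ℕ) = 0
    | Sum.inr (Sum.inl i), Sum.inr (Sum.inl j) => (i : ℕ) + 1 = (j : ℕ)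
    | Sum.inr (Sum.inr i), Sum.inr (Sum.inr j) => (i : ℕ) + 1 = (j : ℕ)
    | _, _ => False)

namespace VineAux

variable {V : Type*} (T : SimpleGraph V) (r : V) (l k : ℕ)

/-- Explicit distance function on the vine. -/
noncomputable def dfun : (V ⊕ (Fin l ⊕ Fin k)) → (V ⊕ (Fin l ⊕ Fin k)) → ℕ
  | Sum.inl u, Sum.inl v => T.dist u v
  | Sum.inl u, Sum.inr (Sum.inl i) => T.dist u r + (i : ℕ) + 1
  | Sum.inl u, Sum.inr (Sum.inr i) => T.dist u r + (i : ℕ) + 1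
  | Sum.inr (Sum.inl i), Sum.inl u => T.dist u r + (i : ℕ) + 1
  | Sum.inr (Sum.inr i), Sum.inl u => T.dist u r + (i : ℕ) + 1
  | Sum.inr (Sum.inl i), Sum.inr (Sum.inl j) => ((i : ℕ) - j) + ((j : ℕ) - i)
  | Sum.inr (Sum.inl i), Sum.inr (Sum.inr j) => (i : ℕ) + (j : ℕ) + 2
  | Sum.inr (Sum.inr i), Sum.inr (Sum.inl j) => (i : ℕ) + (j : ℕ) + 2
  | Sum.inr (Sum.inr i), Sum.inr (Sum.inr j) => ((i : ℕ) - j) + ((j : ℕ) - i)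

variable {T r l k}

lemma dfun_self (a) : dfun T r l k a a = 0 := by
  rcases a with u | i | i <;> simp [dfun]

lemma dfun_symm (a b) : dfun T r l k a b = dfun T r l k b a := by
  have hc : ∀ u v : V, T.dist u v = T.dist v u := fun u v => SimpleGraph.dist_comm
  rcases a with u | i | i <;> rcases b with v | j | j <;> simp [dfun] <;>
    first | (rw [hc]) | omega

/-- adjacency characterisation -/
lemma vine_adj {a b} (h : (vine T r l k).Adj a b) :
    (∃ u v, a = Sum.inl u ∧ b = Sum.inl v ∧ T.Adj u v) ∨
    (∃ (i : Fin l), (i : ℕ) = 0 ∧ ((a = Sum.inl r ∧ b = Sum.inr (Sum.inl i)) ∨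
        (b = Sum.inl r ∧ a = Sum.inr (Sum.inl i)))) ∨
    (∃ (i : Fin k), (i : ℕ) = 0 ∧ ((a = Sum.inl r ∧ b = Sum.inr (Sum.inr i)) ∨
        (b = Sum.inl r ∧ a = Sum.inr (Sum.inr i)))) ∨
    (∃ (i j : Fin l), ((i : ℕ) + 1 = j ∨ (j : ℕ) + 1 = i) ∧
        a = Sum.inr (Sum.inl i) ∧ b = Sum.inr (Sum.inl j)) ∨
    (∃ (i j : Fin k), ((i : ℕ) + 1 = j ∨ (j : ℕ) + 1 = i) ∧
        a = Sum.inr (Sum.inr i) ∧ b = Sum.inr (Sum.inr j)) := by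
  rw [vine, SimpleGraph.fromRel_adj] at h
  obtain ⟨hne, h | h⟩ := h <;>
    rcases a with u | i | i <;> rcases b with v | j | j <;> simp_all <;> tauto

lemma dfun_step (hc : T.Connected) {b c} (h : (vine T r l k).Adj b c) (a) :
    dfun T r l k a c ≤ dfun T r l k a b + 1 := by
  have htri : ∀ u v w : V, T.Adj v w → T.dist u w ≤ T.dist u v + 1 := by
    intro u v w hvw
    have := hc.dist_triangle (u := u) (v := v) (w := w)
    rwa [(SimpleGraph.dist_eq_one_iff_adj).2 hvw] at this
  have htri' : ∀ u v : V, T.Adj u v → T.dist v r ≤ T.dist u r + 1 := by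
    intro u v huv
    have := htri r u v huv
    have e1 : T.dist r v = T.dist v r := SimpleGraph.dist_comm
    have e2 : T.dist r u = T.dist u r := SimpleGraph.dist_comm
    omega
  rcases vine_adj h with ⟨u, v, rfl, rfl, huv⟩ |
      ⟨i, hi0, ⟨rfl, rfl⟩ | ⟨rfl, rfl⟩⟩ | ⟨i, hi0, ⟨rfl, rfl⟩ | ⟨rfl, rfl⟩⟩ |
      ⟨i, j, hij, rfl, rfl⟩ | ⟨i, j, hij, rfl, rfl⟩ <;>
    rcases a with w | m | m <;>
    simp only [dfun, SimpleGraph.dist_self] <;>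
    first
      | omega
      | (have h1 := htri w u v huv; have h2 := htri w v u huv.symm; omega)
      | (have h1 := htri' u v huv; have h2 := htri' v u huv.symm; omega)

lemma dfun_le_length (hc : T.Connected) {a b} (p : (vine T r l k).Walk a b) :
    dfun T r l k a b ≤ p.length := by
  induction p with
  | nil => simp [dfun_self]
  | @cons u v w h q ih =>
    rw [SimpleGraph.Walk.length_cons, dfun_symm]
    have step := dfun_step hc h.symm w
    rw [dfun_symm (a := w) (b := v)] at step
    omega


section Walks

lemma vine_adj_inl {u v : V} (h : T.Adj u v) :
    (vine T r l k).Adj (Sum.inl u) (Sum.inl v) := by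
  rw [vine, SimpleGraph.fromRel_adj]
  exact ⟨by simp [h.ne], Or.inl h⟩

lemma vine_adj_rL {i : Fin l} (hi : (i : ℕ) = 0) :
    (vine T r l k).Adj (Sum.inl r) (Sum.inr (Sum.inl i)) := by
  rw [vine, SimpleGraph.fromRel_adj]
  exact ⟨by simp, Or.inl ⟨rfl, hi⟩⟩

lemma vine_adj_rR {i : Fin k} (hi : (i : ℕ) = 0) :
    (vine T r l k).Adj (Sum.inl r) (Sum.inr (Sum.inr i)) := by
  rw [vine, SimpleGraph.fromRel_adj]
  exact ⟨by simp, Or.inl ⟨rfl, hi⟩⟩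

lemma vine_adj_stepL {i j : Fin l} (hij : (i : ℕ) + 1 = j) :
    (vine T r l k).Adj (Sum.inr (Sum.inl i)) (Sum.inr (Sum.inl j)) := by
  rw [vine, SimpleGraph.fromRel_adj]
  refine ⟨by simp [Fin.ext_iff]; omega, Or.inl hij⟩

lemma vine_adj_stepR {i j : Fin k} (hij : (i : ℕ) + 1 = j) :
    (vine T r l k).Adj (Sum.inr (Sum.inr i)) (Sum.inr (Sum.inr j)) := by
  rw [vine, SimpleGraph.fromRel_adj]
  refine ⟨by simp [Fin.ext_iff]; omega, Or.inl hij⟩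

variable (T r l k)

def inlHom : T →g vine T r l k := ⟨Sum.inl, fun h => vine_adj_inl h⟩

def walkL : (i : ℕ) → (h : i < l) →
    (vine T r l k).Walk (Sum.inl r) (Sum.inr (Sum.inl ⟨i, h⟩))
  | 0, _ => (vine_adj_rL rfl).toWalk
  | (i+1), h => (walkL i (by omega)).concat (vine_adj_stepL rfl)

lemma length_walkL : ∀ (i : ℕ) (h : i < l), (walkL T r l k i h).length = i + 1
  | 0, _ => rfl
  | (i+1), h => by
    rw [walkL, SimpleGraph.Walk.length_concat, length_walkL i (by omega)]

def walkR : (i : ℕ) → (h : i < k) →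
    (vine T r l k).Walk (Sum.inl r) (Sum.inr (Sum.inr ⟨i, h⟩))
  | 0, _ => (vine_adj_rR rfl).toWalk
  | (i+1), h => (walkR i (by omega)).concat (vine_adj_stepR rfl)

lemma length_walkR : ∀ (i : ℕ) (h : i < k), (walkR T r l k i h).length = i + 1
  | 0, _ => rfl
  | (i+1), h => by
    rw [walkR, SimpleGraph.Walk.length_concat, length_walkR i (by omega)]

def walkSegL : (d : ℕ) → (i j : Fin l) → ((i : ℕ) + d = j) →
    (vine T r l k).Walk (Sum.inr (Sum.inl i)) (Sum.inr (Sum.inl j))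
  | 0, i, j, h => SimpleGraph.Walk.nil.copy rfl (by congr 2; exact Fin.ext (by omega))
  | (d+1), i, j, h =>
    SimpleGraph.Walk.cons
      (vine_adj_stepL (i := i) (j := ⟨(i : ℕ) + 1, by have := j.isLt; omega⟩) rfl)
      (walkSegL d _ j (by simpa using by omega))

lemma length_walkSegL : ∀ (d : ℕ) (i j : Fin l) (h : (i : ℕ) + d = j),
    (walkSegL T r l k d i j h).length = d
  | 0, i, j, h => by simp [walkSegL]
  | (d+1), i, j, h => by
    rw [walkSegL, SimpleGraph.Walk.length_cons, length_walkSegL d _ j _]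

def walkSegR : (d : ℕ) → (i j : Fin k) → ((i : ℕ) + d = j) →
    (vine T r l k).Walk (Sum.inr (Sum.inr i)) (Sum.inr (Sum.inr j))
  | 0, i, j, h => SimpleGraph.Walk.nil.copy rfl (by congr 2; exact Fin.ext (by omega))
  | (d+1), i, j, h =>
    SimpleGraph.Walk.cons
      (vine_adj_stepR (i := i) (j := ⟨(i : ℕ) + 1, by have := j.isLt; omega⟩) rfl)
      (walkSegR d _ j (by simpa using by omega))

lemma length_walkSegR : ∀ (d : ℕ) (i j : Fin k) (h : (i : ℕ) + d = j),
    (walkSegR T r l k d i j h).length = d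
  | 0, i, j, h => by simp [walkSegR]
  | (d+1), i, j, h => by
    rw [walkSegR, SimpleGraph.Walk.length_cons, length_walkSegR d _ j _]

variable {T r l k}

lemma exists_walk (hc : T.Connected) (a b : V ⊕ (Fin l ⊕ Fin k)) :
    ∃ p : (vine T r l k).Walk a b, p.length = dfun T r l k a b := by
  have symmCase : ∀ a b, (∃ p : (vine T r l k).Walk a b, p.length = dfun T r l k a b) →
      ∃ p : (vine T r l k).Walk b a, p.length = dfun T r l k b a := by
    rintro a b ⟨p, hp⟩
    exact ⟨p.reverse, by rw [SimpleGraph.Walk.length_reverse, hp, dfun_symm]⟩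
  rcases a with u | i | i <;> rcases b with v | j | j
  · obtain ⟨p, hp⟩ := hc.exists_walk_length_eq_dist u v
    exact ⟨p.map (inlHom T r l k), by simp [dfun]; erw [SimpleGraph.Walk.length_map, hp]⟩
  · obtain ⟨p, hp⟩ := hc.exists_walk_length_eq_dist u r
    refine ⟨(p.map (inlHom T r l k)).append (walkL T r l k j.val j.isLt), ?_⟩
    erw [SimpleGraph.Walk.length_append, SimpleGraph.Walk.length_map, hp,
      length_walkL]
    simp [dfun]; ring
  · obtain ⟨p, hp⟩ := hc.exists_walk_length_eq_dist u r
    refine ⟨(p.map (inlHom T r l k)).append (walkR T r l k j.val j.isLt), ?_⟩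
    erw [SimpleGraph.Walk.length_append, SimpleGraph.Walk.length_map, hp,
      length_walkR]
    simp [dfun]; ring
  · apply symmCase
    obtain ⟨p, hp⟩ := hc.exists_walk_length_eq_dist v r
    refine ⟨(p.map (inlHom T r l k)).append (walkL T r l k i.val i.isLt), ?_⟩
    erw [SimpleGraph.Walk.length_append, SimpleGraph.Walk.length_map, hp,
      length_walkL]
    simp [dfun]; ring
  · rcases le_or_gt (i : ℕ) (j : ℕ) with hij | hij
    · refine ⟨walkSegL T r l k ((j : ℕ) - i) i j (by omega), ?_⟩
      rw [length_walkSegL]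
      simp [dfun]; omega
    · apply symmCase
      refine ⟨walkSegL T r l k ((i : ℕ) - j) j i (by omega), ?_⟩
      rw [length_walkSegL]
      simp [dfun]; omega
  · refine ⟨((walkL T r l k i.val i.isLt).reverse).append
      (walkR T r l k j.val j.isLt), ?_⟩
    rw [SimpleGraph.Walk.length_append, SimpleGraph.Walk.length_reverse,
      length_walkL, length_walkR]
    simp [dfun]; ring
  · apply symmCase
    obtain ⟨p, hp⟩ := hc.exists_walk_length_eq_dist v r
    refine ⟨(p.map (inlHom T r l k)).append (walkR T r l k i.val i.isLt), ?_⟩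
    erw [SimpleGraph.Walk.length_append, SimpleGraph.Walk.length_map, hp,
      length_walkR]
    simp [dfun]; ring
  · apply symmCase
    refine ⟨((walkL T r l k j.val j.isLt).reverse).append
      (walkR T r l k i.val i.isLt), ?_⟩
    rw [SimpleGraph.Walk.length_append, SimpleGraph.Walk.length_reverse,
      length_walkL, length_walkR]
    simp [dfun]; ring
  · rcases le_or_gt (i : ℕ) (j : ℕ) with hij | hij
    · refine ⟨walkSegR T r l k ((j : ℕ) - i) i j (by omega), ?_⟩
      rw [length_walkSegR]
      simp [dfun]; omega
    · apply symmCase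
      refine ⟨walkSegR T r l k ((i : ℕ) - j) j i (by omega), ?_⟩
      rw [length_walkSegR]
      simp [dfun]; omega

lemma vine_dist (hc : T.Connected) (a b : V ⊕ (Fin l ⊕ Fin k)) :
    (vine T r l k).dist a b = dfun T r l k a b := by
  obtain ⟨p, hp⟩ := exists_walk hc a b
  refine le_antisymm (hp ▸ SimpleGraph.dist_le p) ?_
  obtain ⟨q, hq⟩ := (p.reachable).exists_walk_length_eq_dist
  exact hq ▸ dfun_le_length hc q

end Walks

section Sums

def g1 (m : ℕ) : ℕ := ∑ i : Fin m, (i : ℕ)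

def Psum (m : ℕ) : ℕ := ∑ i : Fin m, ∑ j : Fin m, (((i : ℕ) - j) + ((j : ℕ) - i))

lemma g1_succ (m : ℕ) : g1 (m + 1) = g1 m + m := by
  simp [g1, Fin.sum_univ_castSucc]

lemma Psum_range (m : ℕ) :
    Psum m = ∑ i ∈ Finset.range m, ∑ j ∈ Finset.range m, ((i - j) + (j - i)) := by
  rw [Psum, Fin.sum_univ_eq_sum_range (fun i => ∑ j : Fin m, ((i - (j : ℕ)) + ((j : ℕ) - i)))]
  exact Finset.sum_congr rfl fun i _ =>
    Fin.sum_univ_eq_sum_range (fun j => ((i - j) + (j - i))) m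

lemma g1_range (m : ℕ) : g1 m = ∑ i ∈ Finset.range m, i :=
  Fin.sum_univ_eq_sum_range (fun i => i) m

lemma Psum_succ (m : ℕ) : Psum (m + 1) = Psum m + 2 * (g1 m + m) := by
  rw [Psum_range, Psum_range, g1_range]
  rw [Finset.sum_range_succ]
  have h1 : ∀ i ∈ Finset.range m,
      (∑ j ∈ Finset.range (m+1), ((i - j) + (j - i)))
        = (∑ j ∈ Finset.range m, ((i - j) + (j - i))) + (m - i) := by
    intro i hi
    rw [Finset.sum_range_succ]
    simp only [Finset.mem_range] at hi
    omega
  rw [Finset.sum_congr rfl h1, Finset.sum_add_distrib, Finset.sum_range_succ]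
  have h2 : (∑ j ∈ Finset.range m, ((m - j) + (j - m)))
      = ∑ j ∈ Finset.range m, (m - j) := by
    refine Finset.sum_congr rfl fun j hj => ?_
    simp only [Finset.mem_range] at hj
    omega
  have h3 : (∑ j ∈ Finset.range m, (m - j)) = (∑ i ∈ Finset.range m, i) + m := by
    rw [← Finset.sum_range_reflect (fun j => m - j) m]
    have : ∀ j ∈ Finset.range m, m - (m - 1 - j) = j + 1 := by
      intro j hj; simp only [Finset.mem_range] at hj; omega
    rw [Finset.sum_congr rfl this, Finset.sum_add_distrib, Finset.sum_const,
      Finset.card_range, smul_eq_mul, mul_one]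
  omega

variable [Fintype V]

lemma stot_closed (hc : T.Connected) :
    (∑ a : V ⊕ (Fin l ⊕ Fin k), ∑ b : V ⊕ (Fin l ⊕ Fin k), (vine T r l k).dist a b)
      = (∑ u : V, ∑ v : V, T.dist u v)
        + 2 * ((l : ℕ) * ∑ u : V, T.dist u r + Fintype.card V * (g1 l + l))
        + 2 * ((k : ℕ) * ∑ u : V, T.dist u r + Fintype.card V * (g1 k + k))
        + (Psum l + Psum k)
        + 2 * (k * (g1 l + l) + l * (g1 k + k)) := by
  have h : ∀ a b, (vine T r l k).dist a b = dfun T r l k a b := vine_dist hc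
  have hswapL : (∑ i : Fin l, ∑ j : Fin l, ((j : ℕ) - i))
      = ∑ i : Fin l, ∑ j : Fin l, ((i : ℕ) - j) := Finset.sum_comm
  have hswapK : (∑ i : Fin k, ∑ j : Fin k, ((j : ℕ) - i))
      = ∑ i : Fin k, ∑ j : Fin k, ((i : ℕ) - j) := Finset.sum_comm
  simp only [h, Fintype.sum_sum_type, dfun, g1, Psum,
    Finset.sum_add_distrib, Finset.sum_const, Finset.card_univ, Fintype.card_fin,
    smul_eq_mul, ← Finset.mul_sum, ← Finset.sum_mul, mul_one]
  rw [hswapL, hswapK]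
  ring

end Sums

end VineAux

theorem stmt9 {V : Type*} [Fintype V] (T : SimpleGraph V) (hT : T.IsTree)
    (hV : 1 < Fintype.card V) (r : V) (l k : ℕ) (hl : 1 ≤ l) (hlk : l ≤ k) :
    wiener (vine T r (l - 1) (k + 1)) =
      wiener (vine T r l k)
        + (Fintype.card V + l + k - l - k - 1) * (k - l + 1) ∧
    0 < (Fintype.card V + l + k - l - k - 1) * (k - l + 1) := by
  classical
  have hc : T.Connected := hT.isConnected
  have hco : Fintype.card V + l + k - l - k - 1 = Fintype.card V - 1 := by omega
  rw [hco]
  constructor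
  · have h1 := VineAux.stot_closed (T := T) (r := r) (l := l - 1) (k := k + 1) hc
    have h2 := VineAux.stot_closed (T := T) (r := r) (l := l) (k := k) hc
    have key : (∑ a : V ⊕ (Fin (l-1) ⊕ Fin (k+1)), ∑ b, (vine T r (l-1) (k+1)).dist a b)
        = (∑ a : V ⊕ (Fin l ⊕ Fin k), ∑ b, (vine T r l k).dist a b)
          + 2 * ((Fintype.card V - 1) * (k - l + 1)) := by
      rw [h1, h2]
      obtain ⟨l', rfl⟩ : ∃ l', l = l' + 1 := ⟨l - 1, by omega⟩
      obtain ⟨d, rfl⟩ : ∃ d, k = l' + 1 + d := ⟨k - (l' + 1), by omega⟩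
      obtain ⟨n, hn⟩ : ∃ n, Fintype.card V = n + 2 := ⟨Fintype.card V - 2, by omega⟩
      rw [hn]
      have e1 : l' + 1 - 1 = l' := by omega
      have e2 : l' + 1 + d - (l' + 1) + 1 = d + 1 := by omega
      have e3 : n + 2 - 1 = n + 1 := by omega
      rw [e1, e2, e3]
      rw [show l' + 1 + d + 1 = (l' + 1 + d) + 1 from rfl]
      rw [VineAux.g1_succ (l' + 1 + d), VineAux.Psum_succ (l' + 1 + d),
        show l' + 1 = l' + 1 from rfl]
      rw [show VineAux.g1 (l' + 1) = VineAux.g1 l' + l' from VineAux.g1_succ l',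
        show VineAux.Psum (l' + 1) = VineAux.Psum l' + 2 * (VineAux.g1 l' + l') from
          VineAux.Psum_succ l']
      ring
    show (∑ a : V ⊕ (Fin (l-1) ⊕ Fin (k+1)), ∑ b, (vine T r (l-1) (k+1)).dist a b) / 2
        = (∑ a : V ⊕ (Fin l ⊕ Fin k), ∑ b, (vine T r l k).dist a b) / 2
          + (Fintype.card V - 1) * (k - l + 1)
    omega
  · have h1 : 0 < Fintype.card V - 1 := by omega
    have h2 : 0 < k - l + 1 := by omega
    exact Nat.mul_pos h1 h2
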